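/- arXiv:2508.09628 — 3 statements merged into one kernel-verified Lean document; each statement's English description precedes it below -/
import Mathlib

section
/- Let B ⪰ 0 be symmetric positive semidefinite on R^d, K ⊆ R^d compact convex with 0 ∈ K, diam(K) = D, and consider iterates x_0 ∈ K, x_{t+1} = x_t + γ_t (s_t − x_t) where s_t ∈ argmin_{y ∈ K} ⟨Bx_t, y⟩ and γ_t = 2/(t+2). Then for J(x) = ½⟨Bx,x⟩ and all t ≥ 0: J(x_{t+1}) ≤ (2/(t+1)) · λ_max(B) · D². -/
open scoped RealInnerProductSpace

/-- Matrix-vector multiplication producing a vector in Euclidean space. -/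
noncomputable def matVec {d : ℕ} (B : Matrix (Fin d) (Fin d) ℝ)
    (x : EuclideanSpace ℝ (Fin d)) : EuclideanSpace ℝ (Fin d) :=
  WithLp.toLp 2 (fun i => ∑ j, B i j * x j)

lemma matVec_eq {d : ℕ} (B : Matrix (Fin d) (Fin d) ℝ) (v : EuclideanSpace ℝ (Fin d)) :
    matVec B v = Matrix.toEuclideanLin B v := by
  ext i
  simp [matVec, Matrix.toEuclideanLin_apply, Matrix.mulVec, dotProduct, mul_comm]

lemma quad_le {d : ℕ} [NeZero d] (B : Matrix (Fin d) (Fin d) ℝ) (hB : B.PosSemidef)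
    (v : EuclideanSpace ℝ (Fin d)) :
    ⟪matVec B v, v⟫ ≤ (⨆ i, hB.1.eigenvalues i) * ‖v‖ ^ 2 := by
  classical
  set u := hB.1.eigenvectorBasis with hu
  have hbdd : BddAbove (Set.range hB.1.eigenvalues) := Set.Finite.bddAbove (Set.finite_range _)
  have hT : (Matrix.toEuclideanLin B).IsSymmetric :=
    (Matrix.isHermitian_iff_isSymmetric).1 hB.1
  have hTu : ∀ i, Matrix.toEuclideanLin B (u i) = hB.1.eigenvalues i • u i := by
    intro i
    rw [← matVec_eq]
    have := hB.1.mulVec_eigenvectorBasis i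
    apply PiLp.ext
    intro j
    have := congrFun this j
    simpa [matVec, Matrix.mulVec, dotProduct] using this
  have key : ⟪matVec B v, v⟫ = ∑ i, hB.1.eigenvalues i * ⟪u i, v⟫ ^ 2 := by
    rw [matVec_eq]
    have := u.sum_inner_mul_inner (Matrix.toEuclideanLin B v) v
    rw [← this]
    congr 1
    funext i
    have h1 : ⟪Matrix.toEuclideanLin B v, u i⟫ = hB.1.eigenvalues i * ⟪v, u i⟫ := by
      rw [hT v (u i), hTu i, inner_smul_right]
    rw [h1, real_inner_comm v (u i)]
    ring
  have hnorm : ‖v‖ ^ 2 = ∑ i, ⟪u i, v⟫ ^ 2 := by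
    have := u.sum_inner_mul_inner v v
    rw [real_inner_self_eq_norm_sq] at this
    rw [← this]
    congr 1
    funext i
    rw [real_inner_comm v (u i)]; ring
  rw [key, hnorm, Finset.mul_sum]
  apply Finset.sum_le_sum
  intro i _
  exact mul_le_mul_of_nonneg_right (le_ciSup hbdd i) (sq_nonneg _)

lemma quad_nonneg {d : ℕ} (B : Matrix (Fin d) (Fin d) ℝ) (hB : B.PosSemidef)
    (v : EuclideanSpace ℝ (Fin d)) : 0 ≤ ⟪matVec B v, v⟫ := by
  have := hB.dotProduct_mulVec_nonneg (WithLp.ofLp v)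
  simpa [matVec, Matrix.mulVec, dotProduct, PiLp.inner_apply, mul_comm] using this

lemma quad_expand {d : ℕ} (B : Matrix (Fin d) (Fin d) ℝ) (hB : B.PosSemidef)
    (a w : EuclideanSpace ℝ (Fin d)) (c : ℝ) :
    ⟪matVec B (a + c • w), a + c • w⟫ =
      ⟪matVec B a, a⟫ + 2 * c * ⟪matVec B a, w⟫ + c ^ 2 * ⟪matVec B w, w⟫ := by
  have hT : (Matrix.toEuclideanLin B).IsSymmetric :=
    (Matrix.isHermitian_iff_isSymmetric).1 hB.1
  simp only [matVec_eq, map_add, map_smul, inner_add_left, inner_add_right,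
    inner_smul_left, inner_smul_right, RCLike.conj_to_real]
  have hsym : ⟪Matrix.toEuclideanLin B w, a⟫ = ⟪Matrix.toEuclideanLin B a, w⟫ := by
    rw [hT w a, real_inner_comm]
  rw [hsym]; ring

/-- Frank–Wolfe convergence rate for `J(x) = ½⟨Bx, x⟩`, `B` symmetric PSD, with step size
`γ_t = 2/(t+2)`: `J(x_{t+1}) ≤ (2/(t+1)) λ_max(B) diam(K)²`. -/
theorem fw_rate {d : ℕ} [NeZero d] (K : Set (EuclideanSpace ℝ (Fin d)))
    (hKcomp : IsCompact K) (hKconv : Convex ℝ K)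
    (h0K : (0 : EuclideanSpace ℝ (Fin d)) ∈ K)
    (B : Matrix (Fin d) (Fin d) ℝ) (hB : B.PosSemidef)
    (x s : ℕ → EuclideanSpace ℝ (Fin d)) (hx0 : x 0 ∈ K)
    (hsK : ∀ t, s t ∈ K)
    (hsmin : ∀ t, ∀ y ∈ K, ⟪matVec B (x t), s t⟫ ≤ ⟪matVec B (x t), y⟫)
    (hupd : ∀ t : ℕ, x (t + 1) = x t + (2 / ((t : ℝ) + 2)) • (s t - x t)) :
    ∀ t : ℕ,
      (1 / 2) * ⟪matVec B (x (t + 1)), x (t + 1)⟫ ≤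
        (2 / ((t : ℝ) + 1)) * (⨆ i, hB.1.eigenvalues i) * (Metric.diam K) ^ 2 := by
  set L : ℝ := ⨆ i, hB.1.eigenvalues i with hL
  set D : ℝ := Metric.diam K with hD
  set C : ℝ := L * D ^ 2 with hC
  set h : ℕ → ℝ := fun t => (1 / 2) * ⟪matVec B (x t), x t⟫ with hh
  -- L ≥ 0
  have hLnn : 0 ≤ L := by
    have h0 : (0 : Fin d) = 0 := rfl
    calc (0:ℝ) ≤ hB.1.eigenvalues ⟨0, Nat.pos_of_ne_zero (NeZero.ne d)⟩ :=
          hB.eigenvalues_nonneg _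
      _ ≤ L := le_ciSup (Set.Finite.bddAbove (Set.finite_range _)) _
  have hCnn : 0 ≤ C := by
    apply mul_nonneg hLnn (sq_nonneg _)
  have hhnn : ∀ t, 0 ≤ h t := fun t => by
    have := quad_nonneg B hB (x t); simp only [hh]; linarith
  -- membership
  have hxK : ∀ t, x t ∈ K := by
    intro t
    induction t with
    | zero => exact hx0
    | succ n ih =>
      rw [hupd n]
      have hγ0 : (0:ℝ) ≤ 2 / ((n:ℝ) + 2) := by positivity
      have hγ1 : 2 / ((n:ℝ) + 2) ≤ 1 := by
        rw [div_le_one (by positivity)]; linarith [Nat.cast_nonneg (α := ℝ) n]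
      have := hKconv ih (hsK n) (by linarith : (0:ℝ) ≤ 1 - 2/((n:ℝ)+2)) hγ0 (by ring)
      convert this using 1
      module
  -- descent step
  have hstep : ∀ t : ℕ, h (t + 1) ≤ (1 - 2 / ((t:ℝ) + 2)) * h t + (2 / ((t:ℝ) + 2)) ^ 2 * C / 2 := by
    intro t
    set γ : ℝ := 2 / ((t:ℝ) + 2) with hγ
    have hγ0 : 0 ≤ γ := by positivity
    have hexp := quad_expand B hB (x t) (s t - x t) γ
    rw [← hupd t] at hexp
    -- linear term
    have hlin : ⟪matVec B (x t), s t - x t⟫ ≤ - ⟪matVec B (x t), x t⟫ := by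
      have h1 := hsmin t 0 h0K
      rw [inner_zero_right] at h1
      rw [inner_sub_right]
      linarith
    -- quadratic term
    have hquad : ⟪matVec B (s t - x t), s t - x t⟫ ≤ C := by
      have h1 := quad_le B hB (s t - x t)
      have h2 : ‖s t - x t‖ ≤ D := by
        rw [← dist_eq_norm]
        exact Metric.dist_le_diam_of_mem hKcomp.isBounded (hsK t) (hxK t)
      have h3 : ‖s t - x t‖ ^ 2 ≤ D ^ 2 :=
        pow_le_pow_left₀ (norm_nonneg _) h2 2
      calc ⟪matVec B (s t - x t), s t - x t⟫ ≤ L * ‖s t - x t‖ ^ 2 := h1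
        _ ≤ L * D ^ 2 := mul_le_mul_of_nonneg_left h3 hLnn
        _ = C := rfl
    have hq := quad_nonneg B hB (x t)
    simp only [hh]
    rw [hexp]
    nlinarith [mul_le_mul_of_nonneg_left hlin (by linarith : (0:ℝ) ≤ 2 * γ),
      mul_le_mul_of_nonneg_left hquad (sq_nonneg γ), mul_nonneg hγ0 hq]
  -- main induction
  have main : ∀ t : ℕ, h (t + 1) ≤ 2 / ((t:ℝ) + 1) * C := by
    intro t
    induction t with
    | zero =>
      have := hstep 0
      norm_num at this ⊢
      linarith [hhnn 0]
    | succ n ih =>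
      have hs := hstep (n + 1)
      set A : ℝ := (n : ℝ) with hA
      have hA0 : 0 ≤ A := Nat.cast_nonneg n
      have hcast : ((n + 1 : ℕ) : ℝ) + 2 = A + 3 := by push_cast [hA]; ring
      rw [hcast] at hs
      have hcoef : (0:ℝ) ≤ 1 - 2 / (A + 3) := by
        rw [sub_nonneg, div_le_one (by linarith)]; linarith
      have step2 : h (n + 2) ≤ (1 - 2/(A+3)) * (2/(A+1) * C) + (2/(A+3))^2 * C / 2 := by
        calc h (n + 2) ≤ (1 - 2/(A+3)) * h (n+1) + (2/(A+3))^2 * C / 2 := hs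
          _ ≤ (1 - 2/(A+3)) * (2/(A+1) * C) + (2/(A+3))^2 * C / 2 := by
              have := mul_le_mul_of_nonneg_left ih hcoef
              linarith
      have harith : (1 - 2/(A+3)) * (2/(A+1)) + (2/(A+3))^2 / 2 ≤ 2/(A+2) := by
        have h1 : A + 1 ≠ 0 := by positivity
        have h2 : A + 2 ≠ 0 := by positivity
        have h3 : A + 3 ≠ 0 := by positivity
        rw [← sub_nonneg]
        have e : 2/(A+2) - ((1 - 2/(A+3)) * (2/(A+1)) + (2/(A+3))^2 / 2)
            = 2/((A+2)*(A+3)^2) := by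
          field_simp
          ring
        rw [e]
        positivity
      have hfin : (1 - 2/(A+3)) * (2/(A+1) * C) + (2/(A+3))^2 * C / 2 ≤ 2/(A+2) * C := by
        have := mul_le_mul_of_nonneg_right harith hCnn
        calc (1 - 2/(A+3)) * (2/(A+1) * C) + (2/(A+3))^2 * C / 2
            = ((1 - 2/(A+3)) * (2/(A+1)) + (2/(A+3))^2 / 2) * C := by ring
          _ ≤ 2/(A+2) * C := this
      have hcast2 : ((n + 1 : ℕ) : ℝ) + 1 = A + 2 := by push_cast [hA]; ring
      rw [show (n + 1 + 1 : ℕ) = n + 2 from rfl, hcast2]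
      linarith
  intro t
  have := main t
  simp only [hh] at this
  calc (1 / 2) * ⟪matVec B (x (t + 1)), x (t + 1)⟫ ≤ 2 / ((t:ℝ) + 1) * C := this
    _ = (2 / ((t : ℝ) + 1)) * L * D ^ 2 := by rw [hC]; ring
end

section
/- Let K ⊆ R^d be a compact convex set, v ∈ K, and γ ∈ (0,1). Suppose that for all x, y ∈ K with x ≠ v and y ≠ v, the angle at v between x − v and y − v is strictly less than π/2, i.e., ⟨x − v, y − v⟩ > 0. Then for every x ∈ K and every y ∈ K, ‖(1−γ)x + γy − v‖ ≥ ‖(1−γ)x + γv − v‖ = (1−γ)‖x − v‖. In other words, v is a minimizer of y ↦ ‖(1−γ)x + γy − v‖ over y ∈ K. -/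
open scoped RealInnerProductSpace

/-- Cone condition: if all angles at `v` between points of `K` are acute, then for every
`x, y ∈ K` and `γ ∈ (0,1)`,
`‖(1−γ)x + γy − v‖ ≥ ‖(1−γ)x + γv − v‖ = (1−γ)‖x − v‖`, i.e. `v` minimizes
`y ↦ ‖(1−γ)x + γy − v‖` over `K`. -/
theorem cone_condition {d : ℕ} (K : Set (EuclideanSpace ℝ (Fin d)))
    (hKcomp : IsCompact K) (hKconv : Convex ℝ K)
    (v : EuclideanSpace ℝ (Fin d)) (hv : v ∈ K)
    (γ : ℝ) (hγ : γ ∈ Set.Ioo (0 : ℝ) 1)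
    (hangle : ∀ x ∈ K, ∀ y ∈ K, x ≠ v → y ≠ v → 0 < ⟪x - v, y - v⟫) :
    ∀ x ∈ K, ∀ y ∈ K,
      ‖(1 - γ) • x + γ • y - v‖ ≥ (1 - γ) * ‖x - v‖ ∧
      ‖(1 - γ) • x + γ • v - v‖ = (1 - γ) * ‖x - v‖ := by
  obtain ⟨hγ0, hγ1⟩ := hγ
  intro x hx y hy
  have heq : ‖(1 - γ) • x + γ • v - v‖ = (1 - γ) * ‖x - v‖ := by
    have h : (1 - γ) • x + γ • v - v = (1 - γ) • (x - v) := by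
      module
    rw [h, norm_smul, Real.norm_eq_abs, abs_of_nonneg (by linarith)]
  refine ⟨?_, heq⟩
  have hab : 0 ≤ ⟪x - v, y - v⟫ := by
    rcases eq_or_ne x v with h | h
    · simp [h]
    rcases eq_or_ne y v with h' | h'
    · simp [h']
    · exact le_of_lt (hangle x hx y hy h h')
  have key : (1 - γ) • x + γ • y - v = (1 - γ) • (x - v) + γ • (y - v) := by
    module
  rw [key]
  have hsq := norm_add_sq_real ((1 - γ) • (x - v)) (γ • (y - v))
  rw [norm_smul, norm_smul, real_inner_smul_left, real_inner_smul_right,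
    Real.norm_eq_abs, Real.norm_eq_abs, abs_of_nonneg (by linarith : (0:ℝ) ≤ 1 - γ),
    abs_of_nonneg hγ0.le] at hsq
  have h1 := norm_nonneg ((1 - γ) • (x - v) + γ • (y - v))
  have h2 := norm_nonneg (x - v)
  have h3 := norm_nonneg (y - v)
  nlinarith [sq_nonneg (γ * ‖y - v‖), mul_nonneg (mul_nonneg hγ0.le (by linarith : (0:ℝ) ≤ 1 - γ)) hab]
end

section
/- Let K = conv{v_1,...,v_κ} ⊆ R^d, fix i, and let η > 0. Suppose x ∈ R^d satisfies ⟨x, v_i − v_j⟩ ≥ η for all j ≠ i. Let τ > 0 and let z ∈ K with ‖z − v_i‖ ≥ τ. Then ⟨x, z⟩ ≤ ⟨x, v_i⟩ − ητ/D, where D = diam(K) (assume D > 0). -/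
open scoped RealInnerProductSpace

/-- If `⟨x, v_i − v_j⟩ ≥ η` for all `j ≠ i` and `z ∈ K = conv{v_1,…,v_κ}` with
`‖z − v_i‖ ≥ τ`, then `⟨x, z⟩ ≤ ⟨x, v_i⟩ − ητ/D` where `D = diam K > 0`. -/
theorem separation_geometry {d κ : ℕ} (v : Fin κ → EuclideanSpace ℝ (Fin d))
    (K : Set (EuclideanSpace ℝ (Fin d))) (hK : K = convexHull ℝ (Set.range v))
    (i : Fin κ) (η τ : ℝ) (hη : 0 < η) (hτ : 0 < τ)
    (hD : 0 < Metric.diam K)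
    (x : EuclideanSpace ℝ (Fin d)) (hx : ∀ j : Fin κ, j ≠ i → η ≤ ⟪x, v i - v j⟫)
    (z : EuclideanSpace ℝ (Fin d)) (hz : z ∈ K) (hzfar : τ ≤ ‖z - v i‖) :
    ⟪x, z⟫ ≤ ⟪x, v i⟫ - η * τ / Metric.diam K := by
  set D := Metric.diam K with hDdef
  -- K is bounded
  have hKb : Bornology.IsBounded K := by
    rw [hK]
    exact isBounded_convexHull.2 (Set.finite_range v).isBounded
  -- get convex combination
  rw [hK, convexHull_range_eq_exists_affineCombination] at hz
  obtain ⟨s, w, hw0, hw1, hzc⟩ := hz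
  rw [Finset.affineCombination_eq_linear_combination s v w hw1] at hzc
  set W : Fin κ → ℝ := fun j => if j ∈ s then w j else 0 with hWdef
  have hW0 : ∀ j, 0 ≤ W j := by
    intro j; simp only [hWdef]
    split
    · exact hw0 j ‹_›
    · exact le_rfl
  have hW1 : ∑ j, W j = 1 := by
    rw [← hw1]
    rw [Finset.sum_ite_mem, Finset.univ_inter]
  have hzsum : z = ∑ j, W j • v j := by
    rw [← hzc]
    rw [show ∑ j, W j • v j = ∑ j ∈ s, w j • v j from ?_]
    simp only [hWdef, ite_smul, zero_smul]
    rw [Finset.sum_ite_mem, Finset.univ_inter]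
  have hWi1 : W i ≤ 1 := by
    rw [← hW1]
    exact Finset.single_le_sum (fun j _ => hW0 j) (Finset.mem_univ i)
  -- vertices lie in K
  have hvK : ∀ j, v j ∈ K := fun j => hK ▸ subset_convexHull ℝ _ ⟨j, rfl⟩
  have hdist : ∀ j, ‖v j - v i‖ ≤ D := fun j => by
    rw [← dist_eq_norm]; exact Metric.dist_le_diam_of_mem hKb (hvK j) (hvK i)
  -- bound on ‖z - v i‖
  have hnorm : ‖z - v i‖ ≤ (1 - W i) * D := by
    have : z - v i = ∑ j, W j • (v j - v i) := by
      rw [hzsum]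
      simp only [smul_sub, Finset.sum_sub_distrib, ← Finset.sum_smul, hW1, one_smul]
    rw [this]
    calc ‖∑ j, W j • (v j - v i)‖ ≤ ∑ j, ‖W j • (v j - v i)‖ := norm_sum_le _ _
      _ = ∑ j, W j * ‖v j - v i‖ := by
          simp [norm_smul, abs_of_nonneg (hW0 _)]
      _ = ∑ j ∈ Finset.univ \ {i}, W j * ‖v j - v i‖ := by
          rw [← Finset.sum_subset (Finset.sdiff_subset)]
          intro j _ hj
          simp only [Finset.mem_sdiff, Finset.mem_univ, true_and, Finset.mem_singleton,
            not_not] at hj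
          simp [hj]
      _ ≤ ∑ j ∈ Finset.univ \ {i}, W j * D := by
          apply Finset.sum_le_sum
          intro j _
          exact mul_le_mul_of_nonneg_left (hdist j) (hW0 j)
      _ = (1 - W i) * D := by
          rw [← Finset.sum_mul]
          congr 1
          rw [Finset.sum_sdiff_eq_sub (by simp)]
          simp [hW1]
  have hlam : τ / D ≤ 1 - W i := by
    rw [div_le_iff₀ hD]
    exact le_trans (le_trans hzfar hnorm) (by ring_nf; exact le_refl _)
  -- inner product bound
  have hinner : η * (1 - W i) ≤ ⟪x, v i⟫ - ⟪x, z⟫ := by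
    have hiz : ⟪x, z⟫ = ∑ j, W j * ⟪x, v j⟫ := by
      rw [hzsum, inner_sum]
      exact Finset.sum_congr rfl fun j _ => real_inner_smul_right x (v j) (W j)
    have hvi : ⟪x, v i⟫ = ∑ j, W j * ⟪x, v i⟫ := by
      rw [← Finset.sum_mul, hW1, one_mul]
    rw [hiz, hvi, ← Finset.sum_sub_distrib]
    have : ∀ j, W j * ⟪x, v i⟫ - W j * ⟪x, v j⟫ = W j * ⟪x, v i - v j⟫ := by
      intro j; rw [inner_sub_right]; ring
    simp_rw [this]
    calc η * (1 - W i) = ∑ j ∈ Finset.univ \ {i}, W j * η := by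
          rw [← Finset.sum_mul, Finset.sum_sdiff_eq_sub (by simp)]
          simp [hW1]; ring
      _ ≤ ∑ j ∈ Finset.univ \ {i}, W j * ⟪x, v i - v j⟫ := by
          apply Finset.sum_le_sum
          intro j hj
          simp only [Finset.mem_sdiff, Finset.mem_singleton] at hj
          exact mul_le_mul_of_nonneg_left (hx j hj.2) (hW0 j)
      _ ≤ ∑ j, W j * ⟪x, v i - v j⟫ := by
          rw [Finset.sum_sdiff_eq_sub (by simp)]
          simp [sub_self, inner_sub_right]
  have : η * τ / D ≤ η * (1 - W i) := by
    rw [mul_div_assoc]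
    exact mul_le_mul_of_nonneg_left hlam hη.le
  linarith
end
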